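/- Let ABC be a nondegenerate triangle in the Euclidean plane with circumcenter O, circumradius R, orthocenter H, and nine-point center N = midpoint(O,H). If dist(O,N) > R/2, then at least one of the vertices A, B, C lies strictly inside the Euler circle, i.e., there exists X ∈ {A, B, C} with dist(N, X) < R/2. (Consequently every triangle sharing this circumcircle and Euler circle has a vertex on the arc of the circumcircle interior to the Euler circle.) -/
import Mathlib


open EuclideanGeometry Real
open scoped RealInnerProductSpace

set_option maxHeartbeats 1000000 in
/-- If the nine-point center of a nondegenerate triangle is at distance greater than `R/2`
from its circumcenter, then at least one vertex of the triangle lies strictly inside the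
Euler circle. -/
theorem exists_vertex_mem_interior_euler_circle
    (A B C : EuclideanSpace ℝ (Fin 2)) (h : AffineIndependent ℝ ![A, B, C]) :
    let T : Affine.Triangle ℝ (EuclideanSpace ℝ (Fin 2)) := ⟨![A, B, C], h⟩
    let O := T.circumcenter
    let R := T.circumradius
    let H := T.orthocenter
    let N := midpoint ℝ O H
    R / 2 < dist O N → ∃ X ∈ ({A, B, C} : Set (EuclideanSpace ℝ (Fin 2))), dist N X < R / 2 := by
  intro T O R H N hlt
  have h0 : T.points 0 = A := rfl
  have h1 : T.points 1 = B := rfl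
  have h2 : T.points 2 = C := rfl
  have hR : 0 < R := T.circumradius_pos
  set a : EuclideanSpace ℝ (Fin 2) := A -ᵥ O with ha
  set b : EuclideanSpace ℝ (Fin 2) := B -ᵥ O with hb
  set c : EuclideanSpace ℝ (Fin 2) := C -ᵥ O with hc
  have hna : ‖a‖ = R := by
    rw [ha, ← dist_eq_norm_vsub, ← h0]; exact T.dist_circumcenter_eq_circumradius 0
  have hnb : ‖b‖ = R := by
    rw [hb, ← dist_eq_norm_vsub, ← h1]; exact T.dist_circumcenter_eq_circumradius 1
  have hnc : ‖c‖ = R := by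
    rw [hc, ← dist_eq_norm_vsub, ← h2]; exact T.dist_circumcenter_eq_circumradius 2
  -- the orthocenter identity H - O = a + b + c
  have hcen : (Finset.univ : Finset (Fin 3)).centroid ℝ T.points -ᵥ O =
      (3:ℝ)⁻¹ • (a + b + c) := by
    rw [Finset.centroid_def,
      Finset.affineCombination_eq_weightedVSubOfPoint_vadd_of_sum_eq_one _ _ _
        (by simp [Finset.centroidWeights]) O,
      vadd_vsub, Finset.weightedVSubOfPoint_apply]
    simp [Fin.sum_univ_three, Finset.centroidWeights, h0, h1, h2, smul_add, ha, hb, hc]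
  have hH : H -ᵥ O = a + b + c := by
    show T.orthocenter -ᵥ O = a + b + c
    rw [T.orthocenter_eq_smul_vsub_vadd_circumcenter, vadd_vsub, hcen, smul_smul]
    norm_num
  -- inner products
  set r : ℝ := R ^ 2 with hr
  set e1 : ℝ := ⟪a, b⟫ with he1
  set e2 : ℝ := ⟪b, c⟫ with he2
  set e3 : ℝ := ⟪c, a⟫ with he3
  have haa : ⟪a, a⟫ = r := by rw [real_inner_self_eq_norm_sq, hna, hr]
  have hbb : ⟪b, b⟫ = r := by rw [real_inner_self_eq_norm_sq, hnb, hr]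
  have hcc : ⟪c, c⟫ = r := by rw [real_inner_self_eq_norm_sq, hnc, hr]
  have hba : ⟪b, a⟫ = e1 := by rw [real_inner_comm, he1]
  have hcb : ⟪c, b⟫ = e2 := by rw [real_inner_comm, he2]
  have hac : ⟪a, c⟫ = e3 := by rw [real_inner_comm, he3]
  -- distinctness of vertices gives strict Cauchy-Schwarz
  have hinj : Function.Injective ![A, B, C] := h.injective
  have hABne : A ≠ B := fun he => by
    have : (0 : Fin 3) = 1 := hinj (show ![A,B,C] 0 = ![A,B,C] 1 by simp [he])
    exact absurd this (by decide)
  have hBCne : B ≠ C := fun he => by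
    have : (1 : Fin 3) = 2 := hinj (show ![A,B,C] 1 = ![A,B,C] 2 by simp [he])
    exact absurd this (by decide)
  have hCAne : C ≠ A := fun he => by
    have : (2 : Fin 3) = 0 := hinj (show ![A,B,C] 2 = ![A,B,C] 0 by simp [he])
    exact absurd this (by decide)
  have habne : a ≠ b := fun he => hABne (by
    have := congrArg (· +ᵥ O) he; simpa [ha, hb] using this)
  have hbcne : b ≠ c := fun he => hBCne (by
    have := congrArg (· +ᵥ O) he; simpa [hb, hc] using this)
  have hcane : c ≠ a := fun he => hCAne (by
    have := congrArg (· +ᵥ O) he; simpa [hc, ha] using this)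
  have hsub : ∀ u v : EuclideanSpace ℝ (Fin 2), u ≠ v →
      0 < ‖u - v‖ ^ 2 := by
    intro u v huv
    exact pow_pos (norm_pos_iff.mpr (sub_ne_zero.mpr huv)) 2
  have hsq : ∀ u v : EuclideanSpace ℝ (Fin 2),
      ‖u - v‖ ^ 2 = ⟪u, u⟫ - 2 * ⟪u, v⟫ + ⟪v, v⟫ := by
    intro u v
    rw [← real_inner_self_eq_norm_sq]
    simp only [inner_sub_left, inner_sub_right]
    rw [real_inner_comm v u]; ring
  have hE1 : e1 < r := by
    have := hsub a b habne; rw [hsq a b, haa, hbb] at this; linarith [he1, this]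
  have hE2 : e2 < r := by
    have := hsub b c hbcne; rw [hsq b c, hbb, hcc] at this; linarith [he2, this]
  have hE3 : e3 < r := by
    have := hsub c a hcane; rw [hsq c a, hcc, haa] at this; linarith [he3, this]
  -- Gram determinant vanishes for three vectors in the plane
  have hdep : ¬ LinearIndependent ℝ ![a, b, c] := by
    intro hli
    have hcard := hli.fintype_card_le_finrank
    rw [finrank_euclideanSpace_fin] at hcard
    simp at hcard
  obtain ⟨g, hg, i, hgi⟩ := Fintype.not_linearIndependent_iff.mp hdep
  have hgsum : g 0 • a + g 1 • b + g 2 • c = 0 := by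
    have := hg
    rwa [Fin.sum_univ_three] at this
  set M : Matrix (Fin 3) (Fin 3) ℝ := !![r, e1, e3; e1, r, e2; e3, e2, r] with hM
  have hMg : M.mulVec g = 0 := by
    funext j
    have hz : ∀ u : EuclideanSpace ℝ (Fin 2),
        g 0 * ⟪u, a⟫ + g 1 * ⟪u, b⟫ + g 2 * ⟪u, c⟫ = 0 := by
      intro u
      have : ⟪u, g 0 • a + g 1 • b + g 2 • c⟫ = 0 := by rw [hgsum]; simp
      simpa only [inner_add_right, real_inner_smul_right] using this
    have hab' : ⟪b, a⟫ = e1 := hba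
    have hba' : ⟪a, b⟫ = e1 := by rw [real_inner_comm]; exact hba
    have hcb' : ⟪b, c⟫ = e2 := by rw [← he2]
    have hac' : ⟪c, a⟫ = e3 := by rw [← he3]
    fin_cases j
    · show Matrix.mulVec M g 0 = (0:ℝ)
      simp only [hM, Matrix.mulVec, dotProduct, Fin.sum_univ_three,
        Matrix.cons_val', Matrix.cons_val_zero, Matrix.cons_val_one, Matrix.head_cons,
        Matrix.empty_val', Matrix.cons_val_fin_one, Matrix.cons_val_two,
        Matrix.tail_cons, Matrix.of_apply, Matrix.vecHead, Matrix.vecTail, Function.comp_apply, Fin.succ_zero_eq_one, Fin.succ_one_eq_two]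
      linear_combination hz a - g 0 * haa - g 1 * hba' - g 2 * hac
    · show Matrix.mulVec M g 1 = (0:ℝ)
      simp only [hM, Matrix.mulVec, dotProduct, Fin.sum_univ_three,
        Matrix.cons_val', Matrix.cons_val_zero, Matrix.cons_val_one, Matrix.head_cons,
        Matrix.empty_val', Matrix.cons_val_fin_one, Matrix.cons_val_two,
        Matrix.tail_cons, Matrix.of_apply, Matrix.vecHead, Matrix.vecTail, Function.comp_apply, Fin.succ_zero_eq_one, Fin.succ_one_eq_two]
      linear_combination hz b - g 0 * hab' - g 1 * hbb - g 2 * hcb'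
    · show Matrix.mulVec M g 2 = (0:ℝ)
      simp only [hM, Matrix.mulVec, dotProduct, Fin.sum_univ_three,
        Matrix.cons_val', Matrix.cons_val_zero, Matrix.cons_val_one, Matrix.head_cons,
        Matrix.empty_val', Matrix.cons_val_fin_one, Matrix.cons_val_two,
        Matrix.tail_cons, Matrix.of_apply, Matrix.vecHead, Matrix.vecTail, Function.comp_apply, Fin.succ_zero_eq_one, Fin.succ_one_eq_two]
      linear_combination hz c - g 0 * hac' - g 1 * hcb - g 2 * hcc
  have hgne : g ≠ 0 := fun hgz => hgi (by rw [hgz]; rfl)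
  have hdet : M.det = 0 := Matrix.exists_mulVec_eq_zero_iff.mp ⟨g, hgne, hMg⟩
  rw [Matrix.det_fin_three] at hdet
  simp only [hM, Matrix.cons_val', Matrix.cons_val_zero, Matrix.cons_val_one, Matrix.head_cons,
    Matrix.empty_val', Matrix.cons_val_fin_one, Matrix.head_fin_const, Matrix.cons_val_two,
    Matrix.tail_cons, Matrix.of_apply] at hdet
  have hG : r^3 + 2 * (e1 * e2 * e3) - r * (e1^2 + e2^2 + e3^2) = 0 := by linear_combination hdet
  -- the hypothesis: ‖a+b+c‖ > R
  have hNO : N -ᵥ O = (2:ℝ)⁻¹ • (a + b + c) := by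
    show midpoint ℝ O H -ᵥ O = _
    rw [midpoint_vsub_left, hH]
    norm_num
  have hdON : dist O N = ‖a + b + c‖ / 2 := by
    rw [dist_comm, dist_eq_norm_vsub (EuclideanSpace ℝ (Fin 2)), hNO, norm_smul]
    norm_num [div_eq_inv_mul]
  have hsum_sq : ‖a + b + c‖ ^ 2 = 3 * r + 2 * (e1 + e2 + e3) := by
    rw [← real_inner_self_eq_norm_sq]
    simp only [inner_add_left, inner_add_right]
    rw [haa, hbb, hcc, hba, hcb, hac, he1, he2, he3]
    ring
  have hS3 : r < 3 * r + 2 * (e1 + e2 + e3) := by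
    rw [← hsum_sq, hr]
    have hRn : R < ‖a + b + c‖ := by
      rw [hdON] at hlt; linarith
    calc R ^ 2 < ‖a + b + c‖ ^ 2 := by nlinarith [norm_nonneg (a + b + c)]
      _ = _ := rfl
  -- suppose no vertex is strictly inside
  by_contra hcon
  push_neg at hcon
  have hvsub : ∀ X : EuclideanSpace ℝ (Fin 2), X -ᵥ N = (X -ᵥ O) - ((2:ℝ)⁻¹ • (a + b + c)) := by
    intro X
    rw [← hNO, vsub_sub_vsub_cancel_right]
  have hdist : ∀ X : EuclideanSpace ℝ (Fin 2), ∀ u : EuclideanSpace ℝ (Fin 2),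
      X -ᵥ O = u → dist N X = ‖u - (2:ℝ)⁻¹ • (a + b + c)‖ := by
    intro X u hu
    rw [dist_comm, dist_eq_norm_vsub (EuclideanSpace ℝ (Fin 2)), hvsub, hu]
  have hAin : A ∈ ({A, B, C} : Set (EuclideanSpace ℝ (Fin 2))) := by simp
  have hBin : B ∈ ({A, B, C} : Set (EuclideanSpace ℝ (Fin 2))) := by simp
  have hCin : C ∈ ({A, B, C} : Set (EuclideanSpace ℝ (Fin 2))) := by simp
  have hhalf : ∀ u : EuclideanSpace ℝ (Fin 2),
      R / 2 ≤ ‖u - (2:ℝ)⁻¹ • (a + b + c)‖ → r ≤ ‖(2:ℝ) • u - (a + b + c)‖ ^ 2 := by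
    intro u hu
    have h2 : ‖(2:ℝ) • u - (a + b + c)‖ = 2 * ‖u - (2:ℝ)⁻¹ • (a + b + c)‖ := by
      rw [show (2:ℝ) • u - (a + b + c) = (2:ℝ) • (u - (2:ℝ)⁻¹ • (a + b + c)) by
        rw [smul_sub, smul_inv_smul₀ (by norm_num : (2:ℝ) ≠ 0)], norm_smul]
      simp
    rw [h2, hr]
    nlinarith [hu, hR, norm_nonneg (u - (2:ℝ)⁻¹ • (a + b + c))]
  have hfA : r ≤ 3 * r + 2 * (e2 - e1 - e3) := by
    have := hhalf a (by rw [← hdist A a ha.symm]; exact hcon A hAin)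
    have hx : ‖(2:ℝ) • a - (a + b + c)‖ ^ 2 = 3 * r + 2 * (e2 - e1 - e3) := by
      rw [← real_inner_self_eq_norm_sq]
      simp only [inner_sub_left, inner_sub_right, inner_add_left, inner_add_right,
        real_inner_smul_left, real_inner_smul_right]
      rw [haa, hbb, hcc, hba, hcb, hac, he1, he2, he3]
      ring
    linarith [hx ▸ this]
  have hfB : r ≤ 3 * r + 2 * (e3 - e1 - e2) := by
    have := hhalf b (by rw [← hdist B b hb.symm]; exact hcon B hBin)
    have hx : ‖(2:ℝ) • b - (a + b + c)‖ ^ 2 = 3 * r + 2 * (e3 - e1 - e2) := by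
      rw [← real_inner_self_eq_norm_sq]
      simp only [inner_sub_left, inner_sub_right, inner_add_left, inner_add_right,
        real_inner_smul_left, real_inner_smul_right]
      rw [haa, hbb, hcc, hba, hcb, hac, he1, he2, he3]
      ring
    linarith [hx ▸ this]
  have hfC : r ≤ 3 * r + 2 * (e1 - e2 - e3) := by
    have := hhalf c (by rw [← hdist C c hc.symm]; exact hcon C hCin)
    have hx : ‖(2:ℝ) • c - (a + b + c)‖ ^ 2 = 3 * r + 2 * (e1 - e2 - e3) := by
      rw [← real_inner_self_eq_norm_sq]
      simp only [inner_sub_left, inner_sub_right, inner_add_left, inner_add_right,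
        real_inner_smul_left, real_inner_smul_right]
      rw [haa, hbb, hcc, hba, hcb, hac, he1, he2, he3]
      ring
    linarith [hx ▸ this]
  -- final algebraic contradiction
  have hrpos : 0 < r := by rw [hr]; positivity
  have key : r * ((2*r + 2*(e2-e1-e3)) * ((2*r + 2*(e3-e1-e2)) * (2*r + 2*(e1-e2-e3)))) =
      -8 * (2*r + 2*(e1+e2+e3)) * ((r-e1) * ((r-e2) * (r-e3))) := by
    linear_combination (32*r - 4*(2*r + 2*(e1+e2+e3))) * hG
  have hL : 0 ≤ r * ((2*r + 2*(e2-e1-e3)) * ((2*r + 2*(e3-e1-e2)) * (2*r + 2*(e1-e2-e3)))) := by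
    apply mul_nonneg hrpos.le
    apply mul_nonneg (by linarith) (mul_nonneg (by linarith) (by linarith))
  have hRneg : -8 * (2*r + 2*(e1+e2+e3)) * ((r-e1) * ((r-e2) * (r-e3))) < 0 := by
    have h1 : 0 < 2*r + 2*(e1+e2+e3) := by linarith
    have h2 : 0 < (r-e1) * ((r-e2) * (r-e3)) := by
      apply mul_pos (by linarith) (mul_pos (by linarith) (by linarith))
    linarith [mul_pos h1 h2]
  linarith [key, hL, hRneg]
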